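/- Let K, L be star bodies in ℝⁿ, φ₁, φ₂ : [0,∞) → [0,∞) continuous strictly increasing with φᵢ(0)=0, φᵢ(1)=1, and suppose the left derivative φ₁'(1⁻) exists, is finite and positive. For ε > 0 let K +̃_{ε} L be the star body defined by φ₁(ρ_ε(u)/ρ_K(u)) + ε φ₂(ρ_ε(u)/ρ_L(u)) = 1. Then φ₁'(1⁻) · lim_{ε→0⁺} (|K| − |K +̃_ε L|)/(n ε) = (1/n) ∫_{S^{n-1}} φ₂(ρ_K(u)/ρ_L(u)) ρ_K(u)ⁿ dσ(u). -/

import Mathlib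

noncomputable section

open Metric Set MeasureTheory Filter

/-- A star body about the origin in `ℝⁿ`, represented by its radial function,
which is continuous and positive on the unit sphere. -/
structure StarBody (n : ℕ) where
  ρ : EuclideanSpace ℝ (Fin n) → ℝ
  pos : ∀ u : EuclideanSpace ℝ (Fin n), ‖u‖ = 1 → 0 < ρ u
  cont : ContinuousOn ρ (sphere (0 : EuclideanSpace ℝ (Fin n)) 1)

/-- `M` is the Orlicz `φ`-radial addition `K +̃_φ L`, i.e.
`φ(ρ_M(u)/ρ_K(u), ρ_M(u)/ρ_L(u)) = 1` for all `u` on the unit sphere. -/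
def IsOrliczSum {n : ℕ} (φ : ℝ → ℝ → ℝ) (K L M : StarBody n) : Prop :=
  ∀ u : EuclideanSpace ℝ (Fin n), ‖u‖ = 1 →
    φ (M.ρ u / K.ρ u) (M.ρ u / L.ρ u) = 1

/-- The spherical Lebesgue measure on the unit sphere `S^{n-1}`. -/
def sphereMeasure (n : ℕ) : Measure (sphere (0 : EuclideanSpace ℝ (Fin n)) 1) :=
  (volume : Measure (EuclideanSpace ℝ (Fin n))).toSphere

/-- The volume of a star body via the polar coordinate formula
`|K| = (1/n) ∫_{S^{n-1}} ρ_K(u)ⁿ dσ(u)`. -/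
def StarBody.vol {n : ℕ} (K : StarBody n) : ℝ :=
  (1 / (n : ℝ)) * ∫ u : sphere (0 : EuclideanSpace ℝ (Fin n)) 1,
    (K.ρ u) ^ n ∂(sphereMeasure n)

/-- The class `Φ̃₁`: continuous strictly increasing on `[0,∞)` with
`φ(0) = 0` and `φ(1) = 1`. -/
def IsPhi1 (φ : ℝ → ℝ) : Prop :=
  ContinuousOn φ (Set.Ici 0) ∧ StrictMonoOn φ (Set.Ici 0) ∧ φ 0 = 0 ∧ φ 1 = 1

/-- Slope limit from the left for a function with `f 1 = 1`. -/
lemma aux_slope (f : ℝ → ℝ) (d : ℝ) (hf1 : f 1 = 1)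
    (h : HasDerivWithinAt f d (Set.Iio 1) 1) :
    Filter.Tendsto (fun r : ℝ => (1 - f r) / (1 - r)) (nhdsWithin 1 (Set.Iio 1)) (nhds d) := by
  have := (hasDerivWithinAt_iff_tendsto_slope' (notMem_Iio.2 le_rfl)).1 h
  refine this.congr fun r => ?_
  simp only [slope_def_field, hf1]
  rw [← neg_div_neg_eq, neg_sub, neg_sub]

/-- Slope limit from the left for `x ↦ xⁿ` at `1`. -/
lemma aux_pow_slope (n : ℕ) :
    Filter.Tendsto (fun r : ℝ => (1 - r ^ n) / (1 - r)) (nhdsWithin 1 (Set.Iio 1)) (nhds n) := by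
  have h : HasDerivWithinAt (fun x : ℝ => x ^ n) (n : ℝ) (Set.Iio 1) 1 := by
    simpa using (hasDerivAt_pow n (1 : ℝ)).hasDerivWithinAt
  have := (hasDerivWithinAt_iff_tendsto_slope' (notMem_Iio.2 le_rfl)).1 h
  refine this.congr fun r => ?_
  simp only [slope_def_field, one_pow]
  rw [← neg_div_neg_eq, neg_sub, neg_sub]

lemma aux_div_eq (a b e f c : ℝ) (hc : c ≠ 0) :
    a / c * b / (e * (f / c)) = a * b / (e * f) := by
  rcases eq_or_ne f 0 with rfl | hf
  · simp
  rcases eq_or_ne e 0 with rfl | he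
  · simp
  field_simp

lemma aux_F_eq (n : ℕ) (d ρ r c nr ε : ℝ) (hρ : ρ ≠ 0) (hc : c ≠ 0) (hε : ε ≠ 0) (hnr : nr ≠ 0) :
    d * ((ρ^n - (r*ρ)^n)/(nr*ε)) = d * ρ^n * ((1 - r^n) * c / (nr * (ε * c))) := by
  rw [mul_pow]; field_simp

lemma aux_F_eq2 (n : ℕ) (d ρ r c nr ε : ℝ) (hρ : ρ ≠ 0) (hc : c ≠ 0) (hε : ε ≠ 0) (hnr : nr ≠ 0) :
    d * ((ρ^n - (r*ρ)^n)/(nr*ε)) = d * ρ^n * (1 - r^n) * c / (nr * (ε * c)) := by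
  rw [mul_pow]; field_simp

lemma aux_bound (n : ℕ) (hn : 0 < (n:ℝ)) (d b M ρ r t c : ℝ) (hd : 0 < d) (hρ0 : 0 ≤ ρ)
    (hρb : ρ ≤ b) (hr0 : 0 ≤ r) (hr1 : r < 1) (hc0 : 0 ≤ c) (hcM : c ≤ M)
    (ht : d/2*(1-r) < 1 - t) :
    d * ρ^n * (1-r^n) * c / ((n:ℝ)*(1-t)) ≤ 2 * b^n * M := by
  have h1r : 0 < 1 - r := by linarith
  have hb0 : 0 ≤ b := hρ0.trans hρb
  have hM : 0 ≤ M := hc0.trans hcM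
  have hrn : r^n ≤ 1 := pow_le_one₀ hr0 hr1.le
  have hpow : 1 - r^n ≤ (n:ℝ)*(1-r) := by
    have h := one_add_mul_le_pow (by linarith : (-2:ℝ) ≤ r-1) n
    have h2 : (1 + (r-1)) = r := by ring
    rw [h2] at h
    linarith
  have hden2 : 0 < (n:ℝ)*(d/2*(1-r)) := by positivity
  have hden_le : (n:ℝ)*(d/2*(1-r)) ≤ (n:ℝ)*(1-t) := by nlinarith
  have hnum_le : d*ρ^n*(1-r^n)*c ≤ d*b^n*((n:ℝ)*(1-r))*M := by
    gcongr

  calc d * ρ^n * (1-r^n) * c / ((n:ℝ)*(1-t))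
      ≤ d*b^n*((n:ℝ)*(1-r))*M/((n:ℝ)*(d/2*(1-r))) := div_le_div₀ (by positivity) hnum_le hden2 hden_le
    _ = 2*b^n*M := by field_simp

lemma aux_nonneg (n : ℕ) (hn : 0 < (n:ℝ)) (d ρ r t c : ℝ) (hd : 0 < d) (hρ0 : 0 ≤ ρ)
    (hr0 : 0 ≤ r) (hr1 : r < 1) (hc0 : 0 ≤ c) (ht : d/2*(1-r) < 1 - t) :
    0 ≤ d * ρ^n * (1-r^n) * c / ((n:ℝ)*(1-t)) := by
  have h1r : 0 < 1 - r := by linarith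
  have hrn : r^n ≤ 1 := pow_le_one₀ hr0 hr1.le
  have hd2 : 0 < d/2*(1-r) := by positivity
  have hden : 0 < (n:ℝ)*(1-t) := mul_pos hn (hd2.trans ht)
  have : 0 ≤ d * ρ^n * (1-r^n) * c := by
    apply mul_nonneg (mul_nonneg (mul_nonneg hd.le (pow_nonneg hρ0 n)) (by linarith)) hc0
  positivity

/-- The variational formula yielding the Orlicz `L_φ`-dual mixed volume:
`φ₁'(1⁻) · lim_{ε→0⁺} (|K| − |K +̃_ε L|)/(nε)
  = (1/n) ∫_{S^{n-1}} φ₂(ρ_K/ρ_L) ρ_Kⁿ dσ`. -/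
theorem dual_mixed_volume_variational {n : ℕ} (hn : 0 < n)
    (φ₁ φ₂ : ℝ → ℝ) (hφ₁ : IsPhi1 φ₁) (hφ₂ : IsPhi1 φ₂)
    (d : ℝ) (hd : 0 < d) (hderiv : HasDerivWithinAt φ₁ d (Set.Iio 1) 1)
    (K L : StarBody n) (S : ℝ → StarBody n)
    (hS : ∀ ε : ℝ, 0 < ε → ∀ u : EuclideanSpace ℝ (Fin n), ‖u‖ = 1 →
      φ₁ ((S ε).ρ u / K.ρ u) + ε * φ₂ ((S ε).ρ u / L.ρ u) = 1) :
    Filter.Tendsto (fun ε : ℝ => d * ((K.vol - (S ε).vol) / ((n : ℝ) * ε)))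
      (nhdsWithin 0 (Set.Ioi 0))
      (nhds ((1 / (n : ℝ)) * ∫ u : sphere (0 : EuclideanSpace ℝ (Fin n)) 1,
        φ₂ (K.ρ u / L.ρ u) * (K.ρ u) ^ n ∂(sphereMeasure n))) := by
  classical
  obtain ⟨hφ₁c, hφ₁m, hφ₁0, hφ₁1⟩ := hφ₁
  obtain ⟨hφ₂c, hφ₂m, hφ₂0, hφ₂1⟩ := hφ₂
  set E := EuclideanSpace ℝ (Fin n) with hE
  have hnR : (0 : ℝ) < n := Nat.cast_pos.2 hn
  have hnne : (n : ℝ) ≠ 0 := hnR.ne'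
  have hdne : d ≠ 0 := hd.ne'
  -- the sphere is nonempty and compact
  haveI : Nonempty (Fin n) := ⟨⟨0, hn⟩⟩
  have hne : (sphere (0 : E) 1).Nonempty := by
    obtain ⟨u, hu⟩ := exists_norm_eq E zero_le_one
    exact ⟨u, by simpa [mem_sphere_zero_iff_norm] using hu⟩
  have hcomp : IsCompact (sphere (0 : E) 1) := isCompact_sphere _ _
  -- extremal bounds for the radial functions
  obtain ⟨ub, hub, hubmax⟩ := hcomp.exists_isMaxOn hne K.cont
  obtain ⟨ul, hul, hulmin⟩ := hcomp.exists_isMinOn hne L.cont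
  set b : ℝ := K.ρ ub with hbdef
  set aL : ℝ := L.ρ ul with haLdef
  have hb : 0 < b := K.pos ub (mem_sphere_zero_iff_norm.1 hub)
  have haL : 0 < aL := L.pos ul (mem_sphere_zero_iff_norm.1 hul)
  set M : ℝ := φ₂ (b / aL) with hMdef
  have hbaL : 0 < b / aL := div_pos hb haL
  have hM : 0 < M := by
    rw [hMdef, ← hφ₂0]
    exact hφ₂m (mem_Ici.2 le_rfl) (mem_Ici.2 hbaL.le) hbaL
  have hφ₂le : ∀ x : ℝ, 0 ≤ x → x ≤ b / aL → φ₂ x ≤ M :=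
    fun x hx hxb => hφ₂m.monotoneOn (mem_Ici.2 hx) (mem_Ici.2 hbaL.le) hxb
  have hφ₂pos : ∀ x : ℝ, 0 < x → 0 < φ₂ x := by
    intro x hx
    rw [← hφ₂0]
    exact hφ₂m (mem_Ici.2 le_rfl) (mem_Ici.2 hx.le) hx
  -- extract δ from the derivative hypothesis
  have hslope := aux_slope φ₁ d hφ₁1 hderiv
  have hev : ∀ᶠ r in nhdsWithin 1 (Set.Iio 1), d / 2 < (1 - φ₁ r) / (1 - r) :=
    hslope.eventually (eventually_gt_nhds (half_lt_self hd))
  obtain ⟨δ₀, hδ₀, hδ₀sub⟩ := Metric.mem_nhdsWithin_iff.1 hev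
  set δ : ℝ := min δ₀ 1 with hδdef
  have hδpos : 0 < δ := lt_min hδ₀ one_pos
  have hδ1 : δ ≤ 1 := min_le_right _ _
  have hδ : ∀ r : ℝ, 1 - δ < r → r < 1 → d / 2 * (1 - r) < 1 - φ₁ r := by
    intro r h1 h2
    have h1r : 0 < 1 - r := by linarith
    have hball : r ∈ Metric.ball (1 : ℝ) δ₀ := by
      rw [Metric.mem_ball, Real.dist_eq]
      rw [abs_of_nonpos (by linarith)]
      have : δ ≤ δ₀ := min_le_left _ _
      linarith
    have hmem : d / 2 < (1 - φ₁ r) / (1 - r) := hδ₀sub ⟨hball, h2⟩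
    calc d / 2 * (1 - r) < (1 - φ₁ r) / (1 - r) * (1 - r) :=
          mul_lt_mul_of_pos_right hmem h1r
      _ = 1 - φ₁ r := div_mul_cancel₀ _ h1r.ne'
  set θ₀ : ℝ := 1 - δ / 2 with hθ₀def
  have hθ₀0 : 0 ≤ θ₀ := by rw [hθ₀def]; linarith
  have hθ₀1 : θ₀ < 1 := by rw [hθ₀def]; linarith
  have hφ₁θ : φ₁ θ₀ < 1 := by
    rw [← hφ₁1]
    exact hφ₁m (mem_Ici.2 hθ₀0) (mem_Ici.2 zero_le_one) hθ₀1
  set ε₀ : ℝ := (1 - φ₁ θ₀) / M with hε₀def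
  have hε₀ : 0 < ε₀ := div_pos (by linarith) hM
  -- key pointwise facts
  have key : ∀ ε : ℝ, 0 < ε → ∀ u : E, ‖u‖ = 1 →
      0 < (S ε).ρ u / K.ρ u ∧ (S ε).ρ u / K.ρ u < 1 ∧
      ε * φ₂ ((S ε).ρ u / K.ρ u * (K.ρ u / L.ρ u)) = 1 - φ₁ ((S ε).ρ u / K.ρ u) ∧
      0 < φ₂ ((S ε).ρ u / K.ρ u * (K.ρ u / L.ρ u)) ∧
      φ₂ ((S ε).ρ u / K.ρ u * (K.ρ u / L.ρ u)) ≤ M := by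
    intro ε hε u hu
    have hK := K.pos u hu
    have hL := L.pos u hu
    have hSu := (S ε).pos u hu
    set r : ℝ := (S ε).ρ u / K.ρ u with hrdef
    have hr0 : 0 < r := div_pos hSu hK
    have hconv : r * (K.ρ u / L.ρ u) = (S ε).ρ u / L.ρ u := by
      rw [hrdef]; field_simp
    have heq : ε * φ₂ (r * (K.ρ u / L.ρ u)) = 1 - φ₁ r := by
      have := hS ε hε u hu
      rw [hconv]; linarith
    have hrs : 0 < r * (K.ρ u / L.ρ u) := mul_pos hr0 (div_pos hK hL)
    have hφpos : 0 < φ₂ (r * (K.ρ u / L.ρ u)) := hφ₂pos _ hrs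
    have hr1 : r < 1 := by
      have h1 : φ₁ r < φ₁ 1 := by
        rw [hφ₁1]
        nlinarith [mul_pos hε hφpos]
      by_contra h
      push_neg at h
      exact absurd (hφ₁m.monotoneOn (mem_Ici.2 zero_le_one)
        (mem_Ici.2 hr0.le) h) (not_le.2 h1)
    have hρle : (S ε).ρ u ≤ K.ρ u := le_of_lt ((div_lt_one hK).1 hr1)
    have hKb : K.ρ u ≤ b := hubmax (mem_sphere_zero_iff_norm.2 hu)
    have haLle : aL ≤ L.ρ u := hulmin (mem_sphere_zero_iff_norm.2 hu)
    have hRsle : r * (K.ρ u / L.ρ u) ≤ b / aL := by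
      rw [hconv]
      exact div_le_div₀ hb.le (hρle.trans hKb) haL haLle
    exact ⟨hr0, hr1, heq, hφpos, hφ₂le _ hrs.le hRsle⟩
  have keyθ : ∀ θ : ℝ, 0 ≤ θ → θ < 1 → ∀ ε : ℝ, 0 < ε → ε * M < 1 - φ₁ θ →
      ∀ u : E, ‖u‖ = 1 → θ < (S ε).ρ u / K.ρ u := by
    intro θ hθ0 hθ1 ε hε hεM u hu
    obtain ⟨hr0, hr1, heq, hφpos, hφle⟩ := key ε hε u hu
    have h1 : φ₁ θ < φ₁ ((S ε).ρ u / K.ρ u) := by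
      have h2 : ε * φ₂ ((S ε).ρ u / K.ρ u * (K.ρ u / L.ρ u)) ≤ ε * M :=
        mul_le_mul_of_nonneg_left hφle hε.le
      linarith
    by_contra h
    push_neg at h
    exact absurd (hφ₁m.monotoneOn (mem_Ici.2 hr0.le) (mem_Ici.2 hθ0) h) (not_le.2 h1)
  -- measure-theoretic setup
  set σ : Measure (sphere (0 : E) 1) := sphereMeasure n with hσdef
  haveI : IsFiniteMeasure σ := by
    rw [hσdef]; unfold sphereMeasure; infer_instance
  haveI : Nonempty (sphere (0 : E) 1) := hne.to_subtype
  set F : ℝ → sphere (0 : E) 1 → ℝ :=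
    fun ε x => d * (((K.ρ x) ^ n - ((S ε).ρ x) ^ n) / ((n : ℝ) * ε)) with hFdef
  set f : sphere (0 : E) 1 → ℝ := fun x => φ₂ (K.ρ x / L.ρ x) * (K.ρ x) ^ n with hfdef
  have hKc : Continuous (fun x : sphere (0 : E) 1 => K.ρ x) := K.cont.restrict
  have hLc : Continuous (fun x : sphere (0 : E) 1 => L.ρ x) := L.cont.restrict
  have hSc : ∀ ε : ℝ, Continuous (fun x : sphere (0 : E) 1 => (S ε).ρ x) :=
    fun ε => (S ε).cont.restrict
  have hint : ∀ g : sphere (0 : E) 1 → ℝ, Continuous g → Integrable g σ := by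
    intro g hg
    obtain ⟨x₀, -, hx₀⟩ := isCompact_univ.exists_isMaxOn univ_nonempty hg.norm.continuousOn
    exact (integrable_const (‖g x₀‖)).mono' hg.aestronglyMeasurable
      (ae_of_all _ fun x => by simpa using hx₀ (mem_univ x))
  have hKint : Integrable (fun x : sphere (0 : E) 1 => (K.ρ x) ^ n) σ := hint _ (hKc.pow n)
  have hSint : ∀ ε : ℝ, Integrable (fun x : sphere (0 : E) 1 => ((S ε).ρ x) ^ n) σ :=
    fun ε => hint _ ((hSc ε).pow n)
  -- pointwise convergence
  have hlim : ∀ x : sphere (0 : E) 1,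
      Tendsto (fun ε => F ε x) (nhdsWithin 0 (Set.Ioi 0)) (nhds (f x)) := by
    intro x
    have hu : ‖(x : E)‖ = 1 := mem_sphere_zero_iff_norm.1 x.2
    have hK := K.pos x hu
    have hL := L.pos x hu
    set s : ℝ := K.ρ x / L.ρ x with hsdef
    have hs : 0 < s := div_pos hK hL
    set R : ℝ → ℝ := fun ε => (S ε).ρ x / K.ρ x with hRdef
    -- step (i): R ε → 1 from the left
    have hRtend : Tendsto R (nhdsWithin 0 (Set.Ioi 0)) (nhdsWithin 1 (Set.Iio 1)) := by
      rw [tendsto_nhdsWithin_iff]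
      constructor
      · rw [tendsto_order]
        constructor
        · intro t ht
          rcases lt_or_ge t 0 with ht0 | ht0
          · filter_upwards [self_mem_nhdsWithin] with ε hε
            exact ht0.trans (key ε hε x hu).1
          · have hφt : φ₁ t < 1 := by
              rw [← hφ₁1]
              exact hφ₁m (mem_Ici.2 ht0) (mem_Ici.2 zero_le_one) ht
            have hc : 0 < (1 - φ₁ t) / M := div_pos (by linarith) hM
            filter_upwards [Ioo_mem_nhdsGT_of_mem
              (⟨le_rfl, hc⟩ : (0 : ℝ) ∈ Set.Ico 0 ((1 - φ₁ t) / M))] with ε hε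
            exact keyθ t ht0 ht ε hε.1 ((lt_div_iff₀ hM).1 hε.2) x hu
        · intro t ht
          filter_upwards [self_mem_nhdsWithin] with ε hε
          exact (key ε hε x hu).2.1.trans ht
      · filter_upwards [self_mem_nhdsWithin] with ε hε
        exact (key ε hε x hu).2.1
    -- step (ii): the limit of the auxiliary expression
    have hG : Tendsto (fun r : ℝ => (1 - r ^ n) * φ₂ (r * s) / ((n : ℝ) * (1 - φ₁ r)))
        (nhdsWithin 1 (Set.Iio 1)) (nhds (φ₂ s / d)) := by
      have hA := aux_pow_slope n
      have hB := aux_slope φ₁ d hφ₁1 hderiv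
      have hC : Tendsto (fun r : ℝ => φ₂ (r * s)) (nhdsWithin 1 (Set.Iio 1))
          (nhds (φ₂ s)) := by
        have hcont : ContinuousAt φ₂ s := hφ₂c.continuousAt (Ici_mem_nhds hs)
        have h1 : Tendsto (fun r : ℝ => r * s) (nhdsWithin 1 (Set.Iio 1)) (nhds s) := by
          have h2 : Tendsto (fun r : ℝ => r * s) (nhds 1) (nhds (1 * s)) :=
            (continuous_mul_right s).tendsto 1
          rw [one_mul] at h2
          exact h2.mono_left nhdsWithin_le_nhds
        exact hcont.tendsto.comp h1
      have hmain : Tendsto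
          (fun r : ℝ => (1 - r ^ n) / (1 - r) * φ₂ (r * s) /
            ((n : ℝ) * ((1 - φ₁ r) / (1 - r))))
          (nhdsWithin 1 (Set.Iio 1)) (nhds ((n : ℝ) * φ₂ s / ((n : ℝ) * d))) :=
        (hA.mul hC).div (tendsto_const_nhds.mul hB) (by positivity)
      have heq2 : (n : ℝ) * φ₂ s / ((n : ℝ) * d) = φ₂ s / d := by
        rw [mul_div_mul_left _ _ hnne]
      rw [heq2] at hmain
      refine hmain.congr' ?_
      filter_upwards [self_mem_nhdsWithin] with r hr
      exact aux_div_eq _ _ _ _ _ (by simp only [Set.mem_Iio] at hr; linarith)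
    have hcomp2 : Tendsto (fun ε => (1 - (R ε) ^ n) * φ₂ (R ε * s) /
        ((n : ℝ) * (1 - φ₁ (R ε)))) (nhdsWithin 0 (Set.Ioi 0)) (nhds (φ₂ s / d)) :=
      hG.comp hRtend
    have hfin : Tendsto (fun ε => d * (K.ρ x) ^ n * ((1 - (R ε) ^ n) * φ₂ (R ε * s) /
        ((n : ℝ) * (1 - φ₁ (R ε))))) (nhdsWithin 0 (Set.Ioi 0))
        (nhds (d * (K.ρ x) ^ n * (φ₂ s / d))) := hcomp2.const_mul _
    have hfx : d * (K.ρ x) ^ n * (φ₂ s / d) = f x := by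
      rw [hfdef, hsdef]; field_simp
    rw [hfx] at hfin
    refine Tendsto.congr' ?_ hfin
    filter_upwards [self_mem_nhdsWithin] with ε hε
    obtain ⟨hr0, hr1, heq, hφpos, -⟩ := key ε hε x hu
    have hεne : (ε : ℝ) ≠ 0 := (ne_of_gt hε)
    have heq' : ε * φ₂ (R ε * s) = 1 - φ₁ (R ε) := by
      simp only [hRdef, hsdef]; exact heq
    have hφpos' : 0 < φ₂ (R ε * s) := by
      simp only [hRdef, hsdef]; exact hφpos
    have hSρ : (S ε).ρ x = R ε * K.ρ x := by
      simp only [hRdef]; exact (div_mul_cancel₀ _ hK.ne').symm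
    symm
    calc F ε x = d * (((K.ρ x) ^ n - (R ε * K.ρ x) ^ n) / ((n : ℝ) * ε)) := by
          rw [hFdef]; simp only [hSρ]
      _ = d * (K.ρ x) ^ n * ((1 - (R ε) ^ n) * φ₂ (R ε * s) /
            ((n : ℝ) * (ε * φ₂ (R ε * s)))) :=
          aux_F_eq n d _ _ _ _ _ hK.ne' hφpos'.ne' hεne hnne
      _ = d * (K.ρ x) ^ n * ((1 - (R ε) ^ n) * φ₂ (R ε * s) /
            ((n : ℝ) * (1 - φ₁ (R ε)))) := by rw [heq']
  -- uniform bound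
  set C : ℝ := 2 * b ^ n * M with hCdef
  have hbound : ∀ ε : ℝ, ε ∈ Set.Ioo 0 ε₀ → ∀ x : sphere (0 : E) 1, ‖F ε x‖ ≤ C := by
    intro ε hε x
    have hu : ‖(x : E)‖ = 1 := mem_sphere_zero_iff_norm.1 x.2
    have hK := K.pos x hu
    obtain ⟨hr0, hr1, heq, hφpos, hφle⟩ := key ε hε.1 x hu
    set r : ℝ := (S ε).ρ x / K.ρ x with hrdef
    have hθ : θ₀ < r := keyθ θ₀ hθ₀0 hθ₀1 ε hε.1 ((lt_div_iff₀ hM).1 hε.2) x hu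
    have hδr : d / 2 * (1 - r) < 1 - φ₁ r := hδ r (by rw [hθ₀def] at hθ; linarith) hr1
    have h1r : 0 < 1 - r := by linarith
    have hden : 0 < (n : ℝ) * (1 - φ₁ r) := by
      apply mul_pos hnR
      have h2 : 0 < d / 2 * (1 - r) := by positivity
      linarith
    -- rewrite F
    have hSρ : (S ε).ρ x = r * K.ρ x := by
      simp only [hrdef]; exact (div_mul_cancel₀ _ hK.ne').symm
    have hFr : F ε x = d * (K.ρ x) ^ n * (1 - r ^ n) * φ₂ (r * (K.ρ x / L.ρ x)) /
        ((n : ℝ) * (1 - φ₁ r)) := by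
      rw [← heq]
      calc F ε x = d * (((K.ρ x) ^ n - (r * K.ρ x) ^ n) / ((n : ℝ) * ε)) := by
            rw [hFdef]; simp only [hSρ]
        _ = _ := aux_F_eq2 n d _ _ _ _ _ hK.ne' hφpos.ne' (ne_of_gt hε.1) hnne
    have hKb : K.ρ x ≤ b := hubmax x.2
    have h0 : 0 ≤ F ε x := by
      rw [hFr]
      exact aux_nonneg n hnR d _ _ _ _ hd hK.le hr0.le hr1 hφpos.le hδr
    rw [Real.norm_of_nonneg h0, hFr, hCdef]
    exact aux_bound n hnR d b M _ _ _ _ hd hK.le hKb hr0.le hr1 hφpos.le hφle hδr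
  -- dominated convergence
  have hmeas : ∀ᶠ ε in nhdsWithin 0 (Set.Ioi 0), AEStronglyMeasurable (F ε) σ := by
    refine Filter.Eventually.of_forall fun ε => ?_
    have : Continuous (F ε) := by
      rw [hFdef]
      exact (continuous_const.mul (((hKc.pow n).sub ((hSc ε).pow n)).div_const _))
    exact this.aestronglyMeasurable
  have hbd : ∀ᶠ ε in nhdsWithin 0 (Set.Ioi 0), ∀ᵐ x ∂σ, ‖F ε x‖ ≤ C := by
    filter_upwards [Ioo_mem_nhdsGT_of_mem (⟨le_rfl, hε₀⟩ : (0 : ℝ) ∈ Set.Ico 0 ε₀)] with ε hε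
    exact ae_of_all _ (hbound ε hε)
  have hDCT := tendsto_integral_filter_of_dominated_convergence (μ := σ)
    (F := F) (f := f) (bound := fun _ => C) hmeas hbd (integrable_const C)
    (ae_of_all _ hlim)
  have hfinal : Tendsto (fun ε => (1 / (n : ℝ)) * ∫ x, F ε x ∂σ)
      (nhdsWithin 0 (Set.Ioi 0))
      (nhds ((1 / (n : ℝ)) * ∫ x, f x ∂σ)) := hDCT.const_mul _
  refine Tendsto.congr' ?_ hfinal
  filter_upwards [self_mem_nhdsWithin] with ε hε
  have hεne : (ε : ℝ) ≠ 0 := ne_of_gt hε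
  have hintF : ∫ x, F ε x ∂σ =
      (d / ((n : ℝ) * ε)) * ∫ x, ((K.ρ x) ^ n - ((S ε).ρ x) ^ n) ∂σ := by
    rw [← integral_const_mul]
    refine integral_congr_ae (ae_of_all _ fun x => ?_)
    rw [hFdef]
    simp only
    ring
  have hvol : K.vol - (S ε).vol =
      (1 / (n : ℝ)) * ∫ x, ((K.ρ x) ^ n - ((S ε).ρ x) ^ n) ∂σ := by
    rw [StarBody.vol, StarBody.vol, integral_sub hKint (hSint ε)]
    ring
  rw [hintF, hvol]
  field_simp
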